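/- arXiv:1905.09493 — 3 statements merged into one kernel-verified Lean document; each statement's English description precedes it below -/
import Mathlib

section
/- Step of the Bernstein identity: Let k ≥ 0, a ∈ ℂ, and 1 ≤ i ≤ n. Define h_i : ℝ₊ⁿ → ℂ by h_i(y) = D(y)^{a−1} · ∏_{l=i}^n y_l, with D(y)^{a−1} = ∏_{m=1}^n y_m^{a−1} (principal powers of positive reals). Then for every x ∈ ℝ₊ⁿ with pairwise distinct coordinates: T_i(k)h_i(x) = (a + k(i−1)) · D(x)^{a−1} · ∏_{l=i+1}^n x_l. -/
open MeasureTheory Finset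

/-- The type-A rational Dunkl operator `T_i(k)` applied to `f` at `x`. -/
noncomputable def dunklOp (n : ℕ) (k : ℝ) (i : Fin n) (f : (Fin n → ℝ) → ℂ)
    (x : Fin n → ℝ) : ℂ :=
  fderiv ℝ f x (Pi.single i 1) +
    (k : ℂ) * ∑ j ∈ Finset.univ.erase i,
      (f x - f (x ∘ Equiv.swap i j)) / ((x i : ℂ) - (x j : ℂ))

/-- `E` is the type-A Dunkl kernel with multiplicity `k`:  for each `z`, `x ↦ E x z` is the
unique real-analytic function on `ℝⁿ` with value `1` at `0` satisfying the Dunkl eigenvalue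
equations `T_i(k) E(·,z) = z_i E(·,z)` at points with pairwise distinct coordinates; moreover
`z ↦ E x z` is entire. -/
structure IsDunklKernel (n : ℕ) (k : ℝ) (E : (Fin n → ℝ) → (Fin n → ℂ) → ℂ) : Prop where
  analyticOn_fst : ∀ z, AnalyticOn ℝ (fun x => E x z) Set.univ
  eval_zero : ∀ z, E 0 z = 1
  eigen : ∀ z (i : Fin n) (x : Fin n → ℝ), Function.Injective x →
    dunklOp n k i (fun y => E y z) x = z i * E x z
  unique : ∀ z (f : (Fin n → ℝ) → ℂ), AnalyticOn ℝ f Set.univ → f 0 = 1 →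
    (∀ (i : Fin n) (x : Fin n → ℝ), Function.Injective x →
      dunklOp n k i f x = z i * f x) → ∀ x, f x = E x z
  analyticOn_snd : ∀ x, AnalyticOn ℂ (fun z => E x z) Set.univ

/-- Step of the Bernstein identity: with
`h_i(y) = D(y)^{a-1} ∏_{l=i}^n y_l`, one has
`T_i(k) h_i (x) = (a + k(i-1)) D(x)^{a-1} ∏_{l=i+1}^n x_l`
at points `x ∈ ℝ₊ⁿ` with pairwise distinct coordinates (0-based indexing: `i : Fin n`
corresponds to the `(i+1)`-th coordinate, so `k(i-1)` becomes `k·i`). -/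
theorem bernstein_step (n : ℕ) (hn : 2 ≤ n) (k : ℝ) (hk : 0 ≤ k)
    (a : ℂ) (i : Fin n) :
    ∀ x : Fin n → ℝ, (∀ m, 0 < x m) → Function.Injective x →
      dunklOp n k i
        (fun y => (∏ m, (y m : ℂ) ^ (a - 1)) * ∏ l ∈ Finset.Ici i, (y l : ℂ)) x
      = (a + ((k * (i : ℕ) : ℝ) : ℂ)) * (∏ m, (x m : ℂ) ^ (a - 1)) *
          ∏ l ∈ Finset.Ioi i, (x l : ℂ) := by
  classical
  intro x hx hinj
  have hx0 : ∀ m, (x m : ℂ) ≠ 0 := fun m => by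
    exact_mod_cast (hx m).ne'
  set f : (Fin n → ℝ) → ℂ :=
    fun y => (∏ m, (y m : ℂ) ^ (a - 1)) * ∏ l ∈ Finset.Ici i, (y l : ℂ) with hf
  set P : ℂ := ∏ m, (x m : ℂ) ^ (a - 1) with hP
  set Q : ℂ := ∏ l ∈ Finset.Ioi i, (x l : ℂ) with hQ
  -- coordinate factor functions
  set g : Fin n → ℝ → ℂ :=
    fun m t => (t : ℂ) ^ (a - 1) * (if i ≤ m then (t : ℂ) else 1) with hgdef
  have hfg : ∀ y : Fin n → ℝ, f y = ∏ m, g m (y m) := by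
    intro y
    rw [hf, hgdef]
    simp only
    rw [Finset.prod_mul_distrib]
    congr 1
    rw [Finset.prod_ite, Finset.prod_const_one, mul_one]
    apply Finset.prod_congr _ (fun _ _ => rfl)
    ext m
    simp [Finset.mem_Ici]
  -- derivative of each coordinate factor
  set g' : Fin n → ℂ := fun m =>
    (a - 1) * (x m : ℂ) ^ (a - 1 - 1) * (if i ≤ m then (x m : ℂ) else 1) +
      (x m : ℂ) ^ (a - 1) * (if i ≤ m then 1 else 0) with hg'def
  have hder : ∀ m : Fin n, HasDerivAt (g m) (g' m) (x m) := by
    intro m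
    have hre : HasDerivAt (fun t : ℝ => (t : ℂ)) 1 (x m) := by
      simpa using (hasDerivAt_id (x m)).ofReal_comp
    have h1 : HasDerivAt (fun t : ℝ => (t : ℂ) ^ (a - 1))
        ((a - 1) * (x m : ℂ) ^ (a - 1 - 1)) (x m) :=
      ((Complex.hasStrictDerivAt_cpow_const (c := a - 1)
        (Complex.ofReal_mem_slitPlane.2 (hx m))).hasDerivAt).comp_ofReal
    have h2 : HasDerivAt (fun t : ℝ => if i ≤ m then (t : ℂ) else 1)
        (if i ≤ m then 1 else 0) (x m) := by
      by_cases h : i ≤ m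
      · simpa [h] using hre
      · simpa [h] using (hasDerivAt_const (x m) (1 : ℂ))
    have := h1.mul h2
    rw [hgdef, hg'def]
    exact this
  -- total derivative
  have hF : ∀ m : Fin n, HasFDerivAt (fun y : Fin n → ℝ => g m (y m))
      (((1 : ℝ →L[ℝ] ℝ).smulRight (g' m)).comp (ContinuousLinearMap.proj m)) x := by
    intro m
    have hproj : HasFDerivAt (fun y : Fin n → ℝ => y m)
        (ContinuousLinearMap.proj m : (Fin n → ℝ) →L[ℝ] ℝ) x :=
      (ContinuousLinearMap.proj m : (Fin n → ℝ) →L[ℝ] ℝ).hasFDerivAt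
    exact ((hder m).hasFDerivAt).comp x hproj
  have hfd : HasFDerivAt f
      (∑ m : Fin n, (∏ j ∈ Finset.univ.erase m, g j (x j)) •
        (((1 : ℝ →L[ℝ] ℝ).smulRight (g' m)).comp (ContinuousLinearMap.proj m))) x := by
    have := HasFDerivAt.finset_prod (u := (Finset.univ : Finset (Fin n)))
      (fun m _ => hF m)
    refine this.congr_of_eventuallyEq ?_
    filter_upwards with y using hfg y
  -- g' at i
  have hstep : (x i : ℂ) ^ (a - 1 - 1) * (x i : ℂ) = (x i : ℂ) ^ (a - 1) := by
    calc (x i : ℂ) ^ (a - 1 - 1) * (x i : ℂ)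
        = (x i : ℂ) ^ (a - 1 - 1) * (x i : ℂ) ^ (1 : ℂ) := by rw [Complex.cpow_one]
      _ = (x i : ℂ) ^ (a - 1 - 1 + 1) := (Complex.cpow_add _ _ (hx0 i)).symm
      _ = (x i : ℂ) ^ (a - 1) := by norm_num
  have hgi : g' i = a * (x i : ℂ) ^ (a - 1) := by
    rw [hg'def]
    simp only [le_refl, if_true]
    calc (a - 1) * (x i : ℂ) ^ (a - 1 - 1) * (x i : ℂ) + (x i : ℂ) ^ (a - 1) * 1
        = (a - 1) * ((x i : ℂ) ^ (a - 1 - 1) * (x i : ℂ)) + (x i : ℂ) ^ (a - 1) := by ring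
      _ = (a - 1) * (x i : ℂ) ^ (a - 1) + (x i : ℂ) ^ (a - 1) := by rw [hstep]
      _ = a * (x i : ℂ) ^ (a - 1) := by ring
  -- product over erase i
  have hprod_all : ∏ m, g m (x m) = P * ((x i : ℂ) * Q) := by
    rw [← hfg, hf, hP, hQ]
    simp only
    congr 1
    rw [Finset.Ici_eq_cons_Ioi, Finset.prod_cons]
  have herase : (∏ j ∈ Finset.univ.erase i, g j (x j)) * ((x i : ℂ) ^ (a - 1) * (x i : ℂ))
      = P * ((x i : ℂ) * Q) := by
    have := Finset.mul_prod_erase Finset.univ (fun m => g m (x m)) (Finset.mem_univ i)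
    rw [← hprod_all, ← this, hgdef]
    simp only [le_refl, if_true]
    ring
  -- value of the fderiv term
  have hfderiv_val : fderiv ℝ f x (Pi.single i 1) = a * P * Q := by
    rw [hfd.fderiv]
    rw [ContinuousLinearMap.sum_apply]
    rw [Finset.sum_eq_single i]
    · simp only [ContinuousLinearMap.smul_apply, ContinuousLinearMap.comp_apply,
        ContinuousLinearMap.proj_apply, ContinuousLinearMap.smulRight_apply,
        ContinuousLinearMap.one_apply, Pi.single_eq_same, one_smul, smul_eq_mul, hgi]
      have hxi : (x i : ℂ) ≠ 0 := hx0 i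
      have h' : (∏ j ∈ Finset.univ.erase i, g j (x j)) * (x i : ℂ) ^ (a - 1) = P * Q := by
        apply mul_right_cancel₀ hxi
        calc (∏ j ∈ Finset.univ.erase i, g j (x j)) * (x i : ℂ) ^ (a - 1) * (x i : ℂ)
            = (∏ j ∈ Finset.univ.erase i, g j (x j)) * ((x i : ℂ) ^ (a - 1) * (x i : ℂ)) := by
              ring
          _ = P * ((x i : ℂ) * Q) := herase
          _ = P * Q * (x i : ℂ) := by ring
      calc (∏ j ∈ Finset.univ.erase i, g j (x j)) * (a * (x i : ℂ) ^ (a - 1))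
          = a * ((∏ j ∈ Finset.univ.erase i, g j (x j)) * (x i : ℂ) ^ (a - 1)) := by ring
        _ = a * (P * Q) := by rw [h']
        _ = a * P * Q := by ring
    · intro m _ hmi
      simp [Pi.single_apply, hmi.symm]
    · intro h
      exact absurd (Finset.mem_univ i) h
  -- the reflection terms
  have hswap : ∀ j ∈ Finset.univ.erase i,
      (f x - f (x ∘ Equiv.swap i j)) / ((x i : ℂ) - (x j : ℂ))
        = if j < i then P * Q else 0 := by
    intro j hj
    have hji : j ≠ i := Finset.ne_of_mem_erase hj
    have hPsym : (∏ m, ((x (Equiv.swap i j m) : ℝ) : ℂ) ^ (a - 1)) = P := by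
      rw [hP]
      exact Equiv.prod_comp (Equiv.swap i j) (fun m => ((x m : ℝ) : ℂ) ^ (a - 1))
    by_cases hlt : j < i
    · -- j < i : the term equals P * Q
      rw [if_pos hlt]
      have hprod_swap : ∏ l ∈ Finset.Ici i, ((x (Equiv.swap i j l) : ℝ) : ℂ)
          = (x j : ℂ) * Q := by
        rw [Finset.Ici_eq_cons_Ioi, Finset.prod_cons, Equiv.swap_apply_left, hQ]
        congr 1
        apply Finset.prod_congr rfl
        intro l hl
        have hl' : i < l := Finset.mem_Ioi.1 hl
        rw [Equiv.swap_apply_of_ne_of_ne hl'.ne' (hlt.trans hl').ne']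
      have hfx : f x = P * ((x i : ℂ) * Q) := (hfg x).trans hprod_all
      have hfsx : f (x ∘ Equiv.swap i j) = P * ((x j : ℂ) * Q) := by
        rw [hf]
        simp only [Function.comp_apply]
        rw [hPsym, hprod_swap]
      rw [hfx, hfsx]
      have hne : (x i : ℂ) - (x j : ℂ) ≠ 0 := by
        rw [sub_ne_zero]
        exact_mod_cast fun h => hji (hinj h).symm
      field_simp
    · -- i < j : the term vanishes
      rw [if_neg hlt]
      have hij : i < j := lt_of_le_of_ne (not_lt.1 hlt) (Ne.symm hji)
      have hjmem : j ∈ Finset.Ici i := Finset.mem_Ici.2 hij.le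
      have himem : i ∈ Finset.Ici i := Finset.mem_Ici.2 le_rfl
      have hprod_swap : ∏ l ∈ Finset.Ici i, ((x (Equiv.swap i j l) : ℝ) : ℂ)
          = ∏ l ∈ Finset.Ici i, ((x l : ℝ) : ℂ) := by
        have hjmem' : j ∈ (Finset.Ici i).erase i := Finset.mem_erase.2 ⟨hji, hjmem⟩
        rw [← Finset.mul_prod_erase _ _ himem, ← Finset.mul_prod_erase _ _ hjmem',
          ← Finset.mul_prod_erase _ (fun l => ((x l : ℝ) : ℂ)) himem,
          ← Finset.mul_prod_erase _ (fun l => ((x l : ℝ) : ℂ)) hjmem']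
        rw [Equiv.swap_apply_left, Equiv.swap_apply_right]
        have : ∏ l ∈ ((Finset.Ici i).erase i).erase j, ((x (Equiv.swap i j l) : ℝ) : ℂ)
            = ∏ l ∈ ((Finset.Ici i).erase i).erase j, ((x l : ℝ) : ℂ) := by
          apply Finset.prod_congr rfl
          intro l hl
          have h1 : l ≠ j := (Finset.mem_erase.1 hl).1
          have h2 : l ≠ i := (Finset.mem_erase.1 (Finset.mem_erase.1 hl).2).1
          rw [Equiv.swap_apply_of_ne_of_ne h2 h1]
        rw [this]
        ring
      have : f (x ∘ Equiv.swap i j) = f x := by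
        rw [hf]
        simp only [Function.comp_apply]
        rw [hPsym, hprod_swap]
      rw [this, sub_self, zero_div]
  -- sum of reflection terms
  have hsum : ∑ j ∈ Finset.univ.erase i,
      (f x - f (x ∘ Equiv.swap i j)) / ((x i : ℂ) - (x j : ℂ))
        = ((i : ℕ) : ℂ) * (P * Q) := by
    rw [Finset.sum_congr rfl hswap, Finset.sum_ite, Finset.sum_const,
      Finset.sum_const_zero, add_zero]
    have hfilter : (Finset.univ.erase i).filter (fun j => j < i) = Finset.Iio i := by
      ext j
      simp only [Finset.mem_filter, Finset.mem_erase, Finset.mem_univ, true_and,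
        Finset.mem_Iio, and_iff_right_iff_imp]
      exact fun h => ⟨h.ne, trivial⟩
    rw [hfilter, Fin.card_Iio]
    simp [nsmul_eq_mul]
  -- finish
  show fderiv ℝ f x (Pi.single i 1) + (k : ℂ) * _ = _
  rw [hfderiv_val, hsum]
  push_cast
  ring
end

section
/- Bernstein identity: Let k ≥ 0 and a ∈ ℂ, and let U = {x ∈ ℝ₊ⁿ : the coordinates of x are pairwise distinct}. Define g_0 : U → ℂ by g_0(x) = D(x)^a (principal powers of positive reals) and recursively g_i = T_i(k)g_{i−1} on U for i = 1,…,n. Then each g_i is well-defined and differentiable on U (in fact g_i(x) = ∏_{m=1}^i (a+k(m−1)) · D(x)^{a−1} · ∏_{l=i+1}^n x_l), and the composite satisfies g_n(x) = b_k(a) · D(x)^{a−1} for all x ∈ U, where b_k(a) = ∏_{i=1}^n (a + k(i−1)). -/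
open MeasureTheory Finset

/-- The set `U` of points of the open orthant with pairwise distinct coordinates. -/
def Udist (n : ℕ) : Set (Fin n → ℝ) := {x | (∀ i, 0 < x i) ∧ Function.Injective x}

private lemma cpow_split {t : ℝ} (ht : 0 < t) (a : ℂ) :
    (t : ℂ) ^ a = (t : ℂ) ^ (a - 1) * (t : ℂ) := by
  have h : (t : ℂ) ≠ 0 := by exact_mod_cast ht.ne'
  calc (t : ℂ) ^ a = (t : ℂ) ^ (a - 1 + 1) := by congr 1; ring
    _ = _ := by rw [Complex.cpow_add _ _ h, Complex.cpow_one]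

private lemma udist_isOpen (n : ℕ) : IsOpen (Udist n) := by
  have h1 : IsOpen {x : Fin n → ℝ | ∀ i, 0 < x i} := by
    rw [Set.setOf_forall]
    exact isOpen_iInter_of_finite fun i => isOpen_lt continuous_const (continuous_apply i)
  have h2 : IsOpen {x : Fin n → ℝ | Function.Injective x} := by
    have he : {x : Fin n → ℝ | Function.Injective x} =
        ⋂ (i) (j) (_ : i ≠ j), {x : Fin n → ℝ | x i ≠ x j} := by
      ext x
      simp only [Set.mem_iInter, Set.mem_setOf_eq]
      constructor
      · intro h i j hij he; exact hij (h he)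
      · intro h u v huv; by_contra hne; exact h u v hne huv
    rw [he]
    exact isOpen_iInter_of_finite fun i => isOpen_iInter_of_finite fun j =>
      isOpen_iInter_of_finite fun _ => isOpen_ne_fun (continuous_apply i) (continuous_apply j)
  have : Udist n = {x : Fin n → ℝ | ∀ i, 0 < x i} ∩ {x | Function.Injective x} := rfl
  rw [this]; exact h1.inter h2

private lemma swap_mem_udist {n : ℕ} {x : Fin n → ℝ} (hx : x ∈ Udist n)
    (σ : Equiv.Perm (Fin n)) : x ∘ σ ∈ Udist n :=
  ⟨fun i => hx.1 (σ i), hx.2.comp σ.injective⟩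

private lemma fderiv_prod_cpow {n : ℕ} (e : Fin n → ℂ) (x : Fin n → ℝ)
    (hx : ∀ m, 0 < x m) (p : Fin n) :
    DifferentiableAt ℝ (fun y : Fin n → ℝ => ∏ m, ((y m : ℂ)) ^ e m) x ∧
    fderiv ℝ (fun y : Fin n → ℝ => ∏ m, ((y m : ℂ)) ^ e m) x (Pi.single p 1) =
      (e p * (x p : ℂ) ^ (e p - 1)) * ∏ j ∈ Finset.univ.erase p, ((x j : ℂ)) ^ e j := by
  have H : ∀ m : Fin n, HasFDerivAt (fun y : Fin n → ℝ => ((y m : ℂ)) ^ e m)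
      ((e m * ((x m : ℂ)) ^ (e m - 1)) •
        (Complex.ofRealCLM.comp (ContinuousLinearMap.proj m : (Fin n → ℝ) →L[ℝ] ℝ))) x := by
    intro m
    have h1 : HasFDerivAt (fun y : Fin n → ℝ => ((y m : ℝ) : ℂ))
        (Complex.ofRealCLM.comp (ContinuousLinearMap.proj m : (Fin n → ℝ) →L[ℝ] ℝ)) x :=
      (Complex.ofRealCLM.comp (ContinuousLinearMap.proj m : (Fin n → ℝ) →L[ℝ] ℝ)).hasFDerivAt
    have h2 : HasDerivAt (fun z : ℂ => z ^ e m)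
        (e m * ((x m : ℂ)) ^ (e m - 1)) ((x m : ℂ)) :=
      (Complex.hasStrictDerivAt_cpow_const (Or.inl (by exact_mod_cast hx m))).hasDerivAt
    exact h2.comp_hasFDerivAt x h1
  have HF := HasFDerivAt.finset_prod (u := Finset.univ) (fun m _ => H m)
  refine ⟨HF.differentiableAt, ?_⟩
  rw [HF.fderiv]
  simp only [ContinuousLinearMap.coe_sum', Finset.sum_apply, ContinuousLinearMap.coe_smul',
    Pi.smul_apply, ContinuousLinearMap.coe_comp', Function.comp_apply,
    ContinuousLinearMap.proj_apply, Pi.single_apply, Complex.ofRealCLM_apply, smul_eq_mul]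
  rw [Finset.sum_eq_single p]
  · simp [mul_comm]
  · intro b _ hb
    simp [hb]
  · simp

private lemma dunkl_step {n : ℕ} (k : ℝ) (a : ℂ) (i : ℕ) (hi : i < n) (C : ℂ)
    (x : Fin n → ℝ) (hx : x ∈ Udist n) (g : (Fin n → ℝ) → ℂ)
    (hEq : ∀ y ∈ Udist n, g y =
      C * ∏ m, ((y m : ℂ)) ^ (if (m : ℕ) < i then a - 1 else a)) :
    dunklOp n k ⟨i, hi⟩ g x
      = (C * (a + (k : ℂ) * (i : ℂ))) *
        ∏ m, ((x m : ℂ)) ^ (if (m : ℕ) < i + 1 then a - 1 else a) := by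
  classical
  set p : Fin n := ⟨i, hi⟩ with hp
  set E : Fin n → ℂ := fun m => if (m : ℕ) < i then a - 1 else a with hE
  set E' : Fin n → ℂ := fun m => if (m : ℕ) < i + 1 then a - 1 else a with hE'
  have hEp : E p = a := by simp [hE, hp]
  have hE'p : E' p = a - 1 := by simp [hE', hp]
  have hEE' : ∀ m : Fin n, m ≠ p → E' m = E m := by
    intro m hm
    have hmi : (m : ℕ) ≠ i := fun h => hm (Fin.ext h)
    by_cases h : (m : ℕ) < i
    · simp only [hE, hE', h, (by omega : (m : ℕ) < i + 1), ↓reduceIte]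
    · have h' : ¬ (m : ℕ) < i + 1 := by omega
      simp only [hE, hE', h, h', ↓reduceIte]
  -- the derivative part
  have hprod := fderiv_prod_cpow E x hx.1 p
  have hev : g =ᶠ[nhds x] fun y : Fin n → ℝ => C * ∏ m, ((y m : ℂ)) ^ E m :=
    Filter.eventuallyEq_of_mem ((udist_isOpen n).mem_nhds hx) hEq
  have hfd : fderiv ℝ g x (Pi.single p 1)
      = C * ((E p * (x p : ℂ) ^ (E p - 1)) * ∏ j ∈ Finset.univ.erase p, ((x j : ℂ)) ^ E j) := by
    rw [hev.fderiv_eq, fderiv_const_mul hprod.1 C]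
    simp only [ContinuousLinearMap.coe_smul', Pi.smul_apply, smul_eq_mul]
    rw [hprod.2]
  -- rewrite the derivative part in terms of E'
  have hFd' : fderiv ℝ g x (Pi.single p 1) = C * a * ∏ m, ((x m : ℂ)) ^ E' m := by
    rw [hfd, hEp]
    have h1 : ∏ m, ((x m : ℂ)) ^ E' m
        = ((x p : ℂ)) ^ E' p * ∏ j ∈ Finset.univ.erase p, ((x j : ℂ)) ^ E' j :=
      (Finset.mul_prod_erase _ _ (Finset.mem_univ p)).symm
    have h2 : ∏ j ∈ Finset.univ.erase p, ((x j : ℂ)) ^ E' j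
        = ∏ j ∈ Finset.univ.erase p, ((x j : ℂ)) ^ E j :=
      Finset.prod_congr rfl fun j hj => by rw [hEE' j (Finset.mem_erase.1 hj).1]
    rw [h1, h2, hE'p]
    ring
  -- the sum part
  have hsum : ∀ j ∈ Finset.univ.erase p,
      (g x - g (x ∘ Equiv.swap p j)) / ((x p : ℂ) - (x j : ℂ))
      = if (j : ℕ) < i then C * ∏ m, ((x m : ℂ)) ^ E' m else 0 := by
    intro j hj
    have hjp : j ≠ p := (Finset.mem_erase.1 hj).1
    have hswap : x ∘ Equiv.swap p j ∈ Udist n := swap_mem_udist hx _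
    have hreidx : ∏ m, (((x ∘ Equiv.swap p j) m : ℂ)) ^ E m
        = ∏ m, ((x m : ℂ)) ^ E (Equiv.swap p j m) := by
      rw [← Equiv.prod_comp (Equiv.swap p j) (fun m => ((x m : ℂ)) ^ E (Equiv.swap p j m))]
      refine Finset.prod_congr rfl fun m _ => ?_
      rw [Equiv.swap_apply_self]
      rfl
    rw [hEq x hx, hEq _ hswap, hreidx]
    by_cases hji : (j : ℕ) < i
    · -- main case
      rw [if_pos hji]
      have hEj : E j = a - 1 := by simp [hE, hji]
      have hE'j : E' j = a - 1 := by simp only [hE', (by omega : (j : ℕ) < i + 1), ↓reduceIte]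
      have hxpj : (x p : ℂ) ≠ (x j : ℂ) := by
        simpa [Complex.ofReal_inj] using fun h => hjp.symm (hx.2 h)
      have hne : (x p : ℂ) - (x j : ℂ) ≠ 0 := sub_ne_zero.2 hxpj
      rw [div_eq_iff hne]
      have hjmem : j ∈ Finset.univ.erase p := hj
      -- split products
      have split : ∀ f : Fin n → ℂ, ∏ m, f m
          = f p * (f j * ∏ m ∈ (Finset.univ.erase p).erase j, f m) := by
        intro f
        rw [← Finset.mul_prod_erase _ _ (Finset.mem_univ p),
          ← Finset.mul_prod_erase _ _ hjmem]
      rw [split (fun m => ((x m : ℂ)) ^ E m),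
        split (fun m => ((x m : ℂ)) ^ E (Equiv.swap p j m)),
        split (fun m => ((x m : ℂ)) ^ E' m)]
      have hrest : ∀ m ∈ (Finset.univ.erase p).erase j,
          E (Equiv.swap p j m) = E m ∧ E' m = E m := by
        intro m hm
        have hmj : m ≠ j := (Finset.mem_erase.1 hm).1
        have hmp : m ≠ p := (Finset.mem_erase.1 (Finset.mem_erase.1 hm).2).1
        rw [Equiv.swap_apply_of_ne_of_ne hmp hmj]
        exact ⟨rfl, hEE' m hmp⟩
      have hr1 : ∏ m ∈ (Finset.univ.erase p).erase j, ((x m : ℂ)) ^ E (Equiv.swap p j m)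
          = ∏ m ∈ (Finset.univ.erase p).erase j, ((x m : ℂ)) ^ E m :=
        Finset.prod_congr rfl fun m hm => by rw [(hrest m hm).1]
      have hr2 : ∏ m ∈ (Finset.univ.erase p).erase j, ((x m : ℂ)) ^ E' m
          = ∏ m ∈ (Finset.univ.erase p).erase j, ((x m : ℂ)) ^ E m :=
        Finset.prod_congr rfl fun m hm => by rw [(hrest m hm).2]
      rw [hr1, hr2, Equiv.swap_apply_left, Equiv.swap_apply_right, hEp, hEj, hE'p, hE'j,
        cpow_split (hx.1 p) a, cpow_split (hx.1 j) a]
      ring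
    · -- zero case
      rw [if_neg hji]
      have hdiff : ∀ m : Fin n, E (Equiv.swap p j m) = E m := by
        intro m
        have hEj : E j = a := by simp [hE, hji]
        rcases eq_or_ne m p with rfl | hmp
        · rw [Equiv.swap_apply_left, hEj, hEp]
        rcases eq_or_ne m j with rfl | hmj
        · rw [Equiv.swap_apply_right, hEj, hEp]
        · rw [Equiv.swap_apply_of_ne_of_ne hmp hmj]
      have : ∏ m, ((x m : ℂ)) ^ E (Equiv.swap p j m) = ∏ m, ((x m : ℂ)) ^ E m :=
        Finset.prod_congr rfl fun m _ => by rw [hdiff m]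
      rw [this, sub_self, zero_div]
  -- assemble
  have hsum2 : ∑ j ∈ Finset.univ.erase p,
      (g x - g (x ∘ Equiv.swap p j)) / ((x p : ℂ) - (x j : ℂ))
      = (i : ℂ) * (C * ∏ m, ((x m : ℂ)) ^ E' m) := by
    rw [Finset.sum_congr rfl hsum, Finset.sum_ite, Finset.sum_const, Finset.sum_const,
      smul_zero, add_zero]
    have hcard : ((Finset.univ.erase p).filter (fun j : Fin n => (j : ℕ) < i)).card = i := by
      have h1 : (Finset.univ.erase p).filter (fun j : Fin n => (j : ℕ) < i)
          = Finset.univ.filter (fun j : Fin n => (j : ℕ) < i) := by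
        ext j
        simp only [Finset.mem_filter, Finset.mem_erase, Finset.mem_univ, true_and, and_true]
        constructor
        · rintro ⟨_, h⟩; exact h
        · intro h
          exact ⟨fun hjp => by simp [hjp, hp] at h, h⟩
      have h2 : Finset.univ.filter (fun j : Fin n => (j : ℕ) < i) = Finset.Iio p := by
        ext j
        simp [Finset.mem_Iio, Fin.lt_def, hp]
      rw [h1, h2, Fin.card_Iio]
    rw [hcard, nsmul_eq_mul]
  show fderiv ℝ g x (Pi.single p 1) + (k : ℂ) * _ = _
  rw [hFd', hsum2]
  ring

/-- Bernstein identity: with `g_0 = D(·)^a` on `U` and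
`g_i = T_i(k) g_{i-1}` on `U` (0-based: `g_{i+1} = T_{i+1}(k) g_i`), each `g_i` is
differentiable on `U` and equals
`∏_{m=1}^i (a+k(m-1)) · D(x)^{a-1} · ∏_{l=i+1}^n x_l`, and in particular
`g_n = b_k(a) D(·)^{a-1}` with `b_k(a) = ∏_{i=1}^n (a+k(i-1))`. -/
theorem bernstein_identity (n : ℕ) (hn : 2 ≤ n) (k : ℝ) (hk : 0 ≤ k) (a : ℂ)
    (g : ℕ → ((Fin n → ℝ) → ℂ))
    (hg0 : ∀ x ∈ Udist n, g 0 x = ∏ m, (x m : ℂ) ^ a)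
    (hgrec : ∀ (i : ℕ) (hi : i < n), ∀ x ∈ Udist n,
      g (i + 1) x = dunklOp n k ⟨i, hi⟩ (g i) x) :
    (∀ i : ℕ, i ≤ n →
      DifferentiableOn ℝ (g i) (Udist n) ∧
      ∀ x ∈ Udist n,
        g i x = (∏ m ∈ Finset.range i, (a + ((k * (m : ℝ) : ℝ) : ℂ))) *
          (∏ m, (x m : ℂ) ^ (a - 1)) *
          ∏ l ∈ Finset.univ.filter (fun l : Fin n => i ≤ (l : ℕ)), (x l : ℂ)) ∧
    ∀ x ∈ Udist n,
      g n x = (∏ m ∈ Finset.range n, (a + ((k * (m : ℝ) : ℝ) : ℂ))) *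
        ∏ m, (x m : ℂ) ^ (a - 1) := by
  classical
  have key : ∀ i, i ≤ n → ∀ x ∈ Udist n,
      g i x = (∏ m ∈ Finset.range i, (a + ((k * (m : ℝ) : ℝ) : ℂ))) *
        ∏ m, ((x m : ℂ)) ^ (if (m : ℕ) < i then a - 1 else a) := by
    intro i
    induction i with
    | zero =>
      intro _ x hx
      simpa using hg0 x hx
    | succ i ih =>
      intro hi1 x hx
      have hi : i < n := Nat.lt_of_succ_le hi1
      have step := dunkl_step k a i hi
        (∏ m ∈ Finset.range i, (a + ((k * (m : ℝ) : ℝ) : ℂ))) x hx (g i) (ih hi.le)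
      rw [hgrec i hi x hx, step, Finset.prod_range_succ]
      push_cast
      ring
  have conv : ∀ (i : ℕ), ∀ x ∈ Udist n,
      ∏ m, ((x m : ℂ)) ^ (if (m : ℕ) < i then a - 1 else a)
      = (∏ m, (x m : ℂ) ^ (a - 1)) *
        ∏ l ∈ Finset.univ.filter (fun l : Fin n => i ≤ (l : ℕ)), (x l : ℂ) := by
    intro i x hx
    have h1 : ∀ m : Fin n, ((x m : ℂ)) ^ (if (m : ℕ) < i then a - 1 else a)
        = (x m : ℂ) ^ (a - 1) * (if i ≤ (m : ℕ) then ((x m : ℂ)) else 1) := by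
      intro m
      by_cases h : (m : ℕ) < i
      · rw [if_pos h, if_neg (by omega), mul_one]
      · rw [if_neg h, if_pos (by omega), cpow_split (hx.1 m) a]
    rw [Finset.prod_congr rfl (fun m _ => h1 m), Finset.prod_mul_distrib,
      ← Finset.prod_filter]
  refine ⟨fun i hile => ⟨?_, ?_⟩, ?_⟩
  · -- differentiability
    intro x hx
    have hprod := (fderiv_prod_cpow (fun m : Fin n => if (m : ℕ) < i then a - 1 else a)
      x hx.1 ⟨0, by omega⟩).1
    have hΦ : DifferentiableAt ℝ
        (fun y : Fin n → ℝ => (∏ m ∈ Finset.range i, (a + ((k * (m : ℝ) : ℝ) : ℂ))) *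
          ∏ m, ((y m : ℂ)) ^ (if (m : ℕ) < i then a - 1 else a)) x :=
      hprod.const_mul _
    have hev : g i =ᶠ[nhds x]
        fun y : Fin n → ℝ => (∏ m ∈ Finset.range i, (a + ((k * (m : ℝ) : ℝ) : ℂ))) *
          ∏ m, ((y m : ℂ)) ^ (if (m : ℕ) < i then a - 1 else a) :=
      Filter.eventuallyEq_of_mem ((udist_isOpen n).mem_nhds hx) (key i hile)
    exact (hev.differentiableAt_iff.mpr hΦ).differentiableWithinAt
  · -- formula
    intro x hx
    rw [key i hile x hx, conv i x hx, mul_assoc]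
  · -- final
    intro x hx
    rw [key n le_rfl x hx]
    congr 1
    exact Finset.prod_congr rfl fun m _ => by rw [if_pos m.isLt]
end

section
/- Properties of the type-A Riesz distributions: Let k > 0 and let R be a family of type-A Riesz distributions. Then for every μ ∈ ℂ and every Schwartz function φ on ℝⁿ: (1) ⟨R_μ, φ∘σ⟩ = ⟨R_μ, φ⟩ for every permutation σ ∈ S_n acting on ℝⁿ by permuting coordinates; (2) if the support of φ is disjoint from the closed orthant [0,∞)ⁿ, then ⟨R_μ, φ⟩ = 0; (3) ⟨R_μ, D·φ⟩ = ∏_{j=1}^n (μ − k(j−1)) · ⟨R_{μ+1}, φ⟩, where (D·φ)(x) = (∏_{i=1}^n x_i)·φ(x). -/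
open MeasureTheory Finset

/-- The type-A Dunkl weight `ω_k(x) = ∏_{i<j} |x_i - x_j|^{2k}`. -/
noncomputable def wk (n : ℕ) (k : ℝ) (x : Fin n → ℝ) : ℝ :=
  ∏ i : Fin n, ∏ j ∈ Finset.Ioi i, |x i - x j| ^ (2 * k)

/-- The open positive orthant `ℝ₊ⁿ = (0,∞)ⁿ`. -/
def Rplus (n : ℕ) : Set (Fin n → ℝ) := {x | ∀ i, 0 < x i}

/-- The constant `d_n(k) = ∏_{j=1}^n Γ(1+jk)/Γ(1+k)`. -/
noncomputable def dnk (n : ℕ) (k : ℝ) : ℝ :=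
  ∏ j ∈ Finset.range n, Real.Gamma (1 + (j + 1) * k) / Real.Gamma (1 + k)

/-- The multivariable Gamma function `Γ_n(μ;k) = ∏_{j=1}^n Γ(μ - k(j-1))`. -/
noncomputable def Gammank (n : ℕ) (k : ℝ) (μ : ℂ) : ℂ :=
  ∏ j ∈ Finset.range n, Complex.Gamma (μ - ((k * (j : ℝ) : ℝ) : ℂ))

/-- A family of type-A Riesz distributions for multiplicity `k > 0`: a map `R : ℂ → 𝓢'(ℝⁿ)`
such that `μ ↦ ⟨R_μ, φ⟩` is entire for every Schwartz `φ`, and for `Re μ > μ₀ = k(n-1)`,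
`⟨R_μ, φ⟩ = (d_n(k)Γ_n(μ;k))⁻¹ ∫_{ℝ₊ⁿ} φ(x) D(x)^{μ-μ₀-1} ω_k(x) dx`. -/
def IsRieszFamily (n : ℕ) (k : ℝ)
    (R : ℂ → (SchwartzMap (Fin n → ℝ) ℂ →L[ℂ] ℂ)) : Prop :=
  (∀ φ : SchwartzMap (Fin n → ℝ) ℂ, Differentiable ℂ (fun μ => R μ φ)) ∧
  ∀ μ : ℂ, k * ((n : ℝ) - 1) < μ.re → ∀ φ : SchwartzMap (Fin n → ℝ) ℂ,
    R μ φ = ((dnk n k : ℂ) * Gammank n k μ)⁻¹ *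
      ∫ x in Rplus n,
        φ x * (∏ i, (x i : ℂ) ^ (μ - ((k * ((n : ℝ) - 1) : ℝ) : ℂ) - 1)) * (wk n k x : ℂ)

/-- Two entire functions agreeing on a right half-plane agree everywhere. -/
lemma entire_eq {f g : ℂ → ℂ} (hf : Differentiable ℂ f) (hg : Differentiable ℂ g)
    (c : ℝ) (h : ∀ z : ℂ, c < z.re → f z = g z) : f = g := by
  apply AnalyticOnNhd.eq_of_eventuallyEq (𝕜 := ℂ)
    (Complex.analyticOnNhd_univ_iff_differentiable.mpr hf)
    (Complex.analyticOnNhd_univ_iff_differentiable.mpr hg)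
    (z₀ := ((c + 1 : ℝ) : ℂ))
  filter_upwards [IsOpen.mem_nhds (isOpen_lt continuous_const Complex.continuous_re)
    (by simp : c < ((c + 1 : ℝ) : ℂ).re)] with z hz using h z hz

lemma measurableSet_Rplus (n : ℕ) : MeasurableSet (Rplus n) := by
  have : Rplus n = Set.univ.pi fun _ : Fin n => Set.Ioi (0:ℝ) := by
    ext x; simp [Rplus, Set.mem_pi]
  rw [this]
  exact MeasurableSet.univ_pi fun i => measurableSet_Ioi

lemma prod_pairs_perm {n : ℕ} (σ : Equiv.Perm (Fin n)) (g : Fin n → Fin n → ℝ)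
    (hg : ∀ i j, g i j = g j i) :
    ∏ i, ∏ j ∈ Finset.Ioi i, g (σ i) (σ j) = ∏ i, ∏ j ∈ Finset.Ioi i, g i j := by
  rw [Finset.prod_sigma', Finset.prod_sigma']
  refine Finset.prod_nbij' (fun p => if σ p.1 < σ p.2 then ⟨σ p.1, σ p.2⟩ else ⟨σ p.2, σ p.1⟩)
    (fun p => if σ⁻¹ p.1 < σ⁻¹ p.2 then ⟨σ⁻¹ p.1, σ⁻¹ p.2⟩ else ⟨σ⁻¹ p.2, σ⁻¹ p.1⟩)
    ?_ ?_ ?_ ?_ ?_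
  · rintro ⟨a, b⟩ hab
    simp only [Finset.mem_sigma, Finset.mem_univ, Finset.mem_Ioi, true_and] at hab ⊢
    have hne : σ a ≠ σ b := fun h => absurd (σ.injective h) (ne_of_lt hab)
    split_ifs with h
    · simpa using h
    · simpa using lt_of_le_of_ne (not_lt.mp h) (Ne.symm hne)
  · rintro ⟨a, b⟩ hab
    simp only [Finset.mem_sigma, Finset.mem_univ, Finset.mem_Ioi, true_and] at hab ⊢
    have hne : σ⁻¹ a ≠ σ⁻¹ b := fun h => absurd (σ⁻¹.injective h) (ne_of_lt hab)
    split_ifs with h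
    · simpa using h
    · simpa using lt_of_le_of_ne (not_lt.mp h) (Ne.symm hne)
  · rintro ⟨a, b⟩ hab
    simp only [Finset.mem_sigma, Finset.mem_univ, Finset.mem_Ioi, true_and] at hab
    by_cases h : σ a < σ b <;> simp [h, hab, not_lt_of_gt hab]
  · rintro ⟨a, b⟩ hab
    simp only [Finset.mem_sigma, Finset.mem_univ, Finset.mem_Ioi, true_and] at hab
    by_cases h : σ.symm a < σ.symm b <;> simp [h, hab, not_lt_of_gt hab]
  · rintro ⟨a, b⟩ hab
    by_cases h : σ a < σ b <;> simp [h, hg (σ a) (σ b)]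

lemma wk_perm {n : ℕ} (k : ℝ) (σ : Equiv.Perm (Fin n)) (x : Fin n → ℝ) :
    wk n k (fun i => x (σ i)) = wk n k x :=
  prod_pairs_perm σ (fun i j => |x i - x j| ^ (2 * k))
    (fun i j => by rw [abs_sub_comm])

/-- Properties of the type-A Riesz distributions: `S_n`-invariance, support in
the closed orthant `[0,∞)ⁿ`, and the identity `D(x)·R_μ = ∏_{j=1}^n (μ-k(j-1)) · R_{μ+1}`. -/
theorem riesz_properties (n : ℕ) (hn : 2 ≤ n) (k : ℝ) (hk : 0 < k)
    (R : ℂ → (SchwartzMap (Fin n → ℝ) ℂ →L[ℂ] ℂ)) (hR : IsRieszFamily n k R)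
    (μ : ℂ) (φ : SchwartzMap (Fin n → ℝ) ℂ) :
    (∀ (σ : Equiv.Perm (Fin n)) (ψ : SchwartzMap (Fin n → ℝ) ℂ),
      (∀ x : Fin n → ℝ, ψ x = φ (fun i => x (σ i))) → R μ ψ = R μ φ) ∧
    (Disjoint (tsupport ⇑φ) {x : Fin n → ℝ | ∀ i, 0 ≤ x i} → R μ φ = 0) ∧
    (∀ ψ : SchwartzMap (Fin n → ℝ) ℂ,
      (∀ x : Fin n → ℝ, ψ x = (∏ i, (x i : ℂ)) * φ x) →
      R μ ψ = (∏ j ∈ Finset.range n, (μ - ((k * (j : ℝ) : ℝ) : ℂ))) * R (μ + 1) φ) := by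
  obtain ⟨hdiff, hform⟩ := hR
  set c : ℝ := k * ((n : ℝ) - 1) with hc
  refine ⟨?_, ?_, ?_⟩
  · -- (1) permutation invariance
    intro σ ψ hψ
    have key : (fun z => R z ψ) = fun z => R z φ := by
      apply entire_eq (hdiff ψ) (hdiff φ) c
      intro z hz
      rw [hform z hz ψ, hform z hz φ]
      congr 1
      -- change of variables
      set T := MeasurableEquiv.piCongrLeft (fun _ : Fin n => ℝ) σ.symm with hTdef
      have hT : ∀ x : Fin n → ℝ, T x = fun j => x (σ j) := by
        intro x; ext j
        simp [hTdef, MeasurableEquiv.piCongrLeft, Equiv.piCongrLeft]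
      have mp := volume_measurePreserving_piCongrLeft (fun _ : Fin n => ℝ) σ.symm
      have hpre : (⇑T) ⁻¹' (Rplus n) = Rplus n := by
        ext x
        simp only [Set.mem_preimage, Rplus, Set.mem_setOf_eq, hT]
        constructor
        · intro h i
          have := h (σ.symm i); simpa using this
        · intro h i; exact h _
      have cov := mp.setIntegral_preimage_emb T.measurableEmbedding
        (fun y => φ y * (∏ i, (y i : ℂ) ^ (z - (c : ℂ) - 1)) * (wk n k y : ℂ)) (Rplus n)
      rw [hpre] at cov
      rw [← cov]
      apply setIntegral_congr_fun (measurableSet_Rplus n)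
      intro x _
      simp only [show ∀ x : Fin n → ℝ, (MeasurableEquiv.piCongrLeft (fun _ : Fin n => ℝ) σ.symm) x = fun j => x (σ j) from hT, hψ]
      rw [wk_perm k σ x, Equiv.prod_comp σ (fun i => (x i : ℂ) ^ (z - (c : ℂ) - 1))]
    exact congrFun key μ
  · -- (2) support
    intro hd
    have key : (fun z => R z φ) = fun _ => (0 : ℂ) := by
      apply entire_eq (hdiff φ) (differentiable_const (0:ℂ)) c
      intro z hz
      rw [hform z hz φ]
      have : ∫ x in Rplus n,
          φ x * (∏ i, (x i : ℂ) ^ (z - (c : ℂ) - 1)) * (wk n k x : ℂ) = 0 := by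
        rw [setIntegral_congr_fun (measurableSet_Rplus n)
          (g := fun _ => (0 : ℂ)) ?_, integral_zero]
        intro x hx
        have hxo : x ∈ {x : Fin n → ℝ | ∀ i, 0 ≤ x i} := fun i => (hx i).le
        have : φ x = 0 := by
          apply image_eq_zero_of_notMem_tsupport
          exact fun hts => Set.disjoint_left.mp hd hts hxo
        simp [this]
      rw [this, mul_zero]
    exact congrFun key μ
  · -- (3) recurrence
    intro ψ hψ
    have key : (fun z => R z ψ) =
        fun z => (∏ j ∈ Finset.range n, (z - ((k * (j : ℝ) : ℝ) : ℂ))) * R (z + 1) φ := by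
      apply entire_eq (hdiff ψ) ?_ c
      · intro z hz
        have hz1 : c < (z + 1).re := by
          simp only [Complex.add_re, Complex.one_re]; linarith
        rw [hform z hz ψ, hform (z + 1) hz1 φ]
        have hfac : ∀ j ∈ Finset.range n, ((z - ((k * (j : ℝ) : ℝ) : ℂ)).re) > 0 := by
          intro j hj
          have hjn : (j : ℝ) ≤ (n : ℝ) - 1 := by
            have := Finset.mem_range.mp hj
            have : (j : ℝ) + 1 ≤ (n : ℝ) := by exact_mod_cast this
            linarith
          simp only [Complex.sub_re, Complex.ofReal_re]
          have : k * (j : ℝ) ≤ c := by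
            rw [hc]; nlinarith
          linarith
        have hfacne : ∀ j ∈ Finset.range n, (z - ((k * (j : ℝ) : ℝ) : ℂ)) ≠ 0 := by
          intro j hj h0
          have := hfac j hj
          rw [h0] at this; simp at this
        set P : ℂ := ∏ j ∈ Finset.range n, (z - ((k * (j : ℝ) : ℝ) : ℂ)) with hP
        have hPne : P ≠ 0 := Finset.prod_ne_zero_iff.mpr hfacne
        have hGam : Gammank n k (z + 1) = P * Gammank n k z := by
          rw [Gammank, Gammank, hP, ← Finset.prod_mul_distrib]
          apply Finset.prod_congr rfl
          intro j hj
          have : z + 1 - ((k * (j : ℝ) : ℝ) : ℂ) = (z - ((k * (j : ℝ) : ℝ) : ℂ)) + 1 := by ring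
          rw [this, Complex.Gamma_add_one _ (hfacne j hj)]
        have hint : (∫ x in Rplus n,
              ψ x * (∏ i, (x i : ℂ) ^ (z - (c : ℂ) - 1)) * (wk n k x : ℂ)) =
            ∫ x in Rplus n,
              φ x * (∏ i, (x i : ℂ) ^ (z + 1 - (c : ℂ) - 1)) * (wk n k x : ℂ) := by
          apply setIntegral_congr_fun (measurableSet_Rplus n)
          intro x hx
          dsimp only
          rw [hψ]
          have : (∏ i, (x i : ℂ) ^ (z + 1 - (c : ℂ) - 1)) =
              (∏ i, (x i : ℂ)) * ∏ i, (x i : ℂ) ^ (z - (c : ℂ) - 1) := by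
            rw [← Finset.prod_mul_distrib]
            apply Finset.prod_congr rfl
            intro i _
            have hx0 : (x i : ℂ) ≠ 0 := Complex.ofReal_ne_zero.mpr (hx i).ne'
            have he : z + 1 - (c : ℂ) - 1 = (z - (c : ℂ) - 1) + 1 := by ring
            rw [he, Complex.cpow_add _ _ hx0, Complex.cpow_one]; ring
          rw [this]; ring
        rw [hint, hGam]
        have hco : P * (((dnk n k : ℝ) : ℂ) * (P * Gammank n k z))⁻¹ =
            (((dnk n k : ℝ) : ℂ) * Gammank n k z)⁻¹ := by
          simp only [mul_inv]
          rw [show P * (((dnk n k : ℝ) : ℂ)⁻¹ * (P⁻¹ * (Gammank n k z)⁻¹)) =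
            (P * P⁻¹) * (((dnk n k : ℝ) : ℂ)⁻¹ * (Gammank n k z)⁻¹) from by ring,
            mul_inv_cancel₀ hPne, one_mul]
        rw [← mul_assoc, hco]
      · exact (Differentiable.mul (by fun_prop) ((hdiff φ).comp
          (differentiable_id.add_const 1)))
    exact congrFun key μ
end
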